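/- Let V be a torsion-free nilpotent group and U a normal subgroup of finite index. Then U and V have the same nilpotency class. -/

import Mathlib

open Subgroup hiding lowerCentralSeries lowerCentralSeries_succ
  lowerCentralSeries_eq_bot_iff_nilpotencyClass_le lowerCentralSeries_nilpotencyClass
open scoped commutatorElement

section Aux

variable {G : Type*} [Group G]

/-- Elements of `γ k` are central when `γ (k+1) = ⊥`. -/
lemma central_of_mem_lcs_aux {k : ℕ} (h : (⊤ : Subgroup G).lowerCentralSeries (k + 1) = ⊥)
    {z : G} (hz : z ∈ (⊤ : Subgroup G).lowerCentralSeries k) (g : G) : z * g = g * z := by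
  have hmem : ⁅z, g⁆ ∈ (⊤ : Subgroup G).lowerCentralSeries (k + 1) := by
    rw [lowerCentralSeries_succ]
    exact commutator_mem_commutator hz (mem_top g)
  rw [h, Subgroup.mem_bot] at hmem
  exact commutatorElement_eq_one_iff_mul_comm.mp hmem

lemma comm_pow_left_aux {k : ℕ} (hbot : (⊤ : Subgroup G).lowerCentralSeries (k + 2) = ⊥)
    {p : G} (hp : p ∈ (⊤ : Subgroup G).lowerCentralSeries k) (w : G) (a : ℕ) :
    ⁅p ^ a, w⁆ = ⁅p, w⁆ ^ a := by
  induction a with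
  | zero => simp
  | succ a ih =>
    have h1 : ⁅p ^ a, w⁆ ∈ (⊤ : Subgroup G).lowerCentralSeries (k + 1) := by
      rw [lowerCentralSeries_succ]
      exact commutator_mem_commutator (pow_mem hp a) (mem_top w)
    have hc := central_of_mem_lcs_aux hbot h1
    have key : ⁅p * p ^ a, w⁆ = p * ⁅p ^ a, w⁆ * p⁻¹ * ⁅p, w⁆ := by
      simp only [commutatorElement_def]; group
    calc ⁅p ^ (a + 1), w⁆ = ⁅p * p ^ a, w⁆ := by rw [pow_succ']
      _ = p * ⁅p ^ a, w⁆ * p⁻¹ * ⁅p, w⁆ := key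
      _ = ⁅p ^ a, w⁆ * p * p⁻¹ * ⁅p, w⁆ := by rw [← hc p]
      _ = ⁅p ^ a, w⁆ * ⁅p, w⁆ := by group
      _ = ⁅p, w⁆ ^ a * ⁅p, w⁆ := by rw [ih]
      _ = ⁅p, w⁆ ^ (a + 1) := (pow_succ _ _).symm

lemma comm_pow_right_aux {k : ℕ} (hbot : (⊤ : Subgroup G).lowerCentralSeries (k + 2) = ⊥)
    {p : G} (hp : p ∈ (⊤ : Subgroup G).lowerCentralSeries k) (y : G) (b : ℕ) :
    ⁅p, y ^ b⁆ = ⁅p, y⁆ ^ b := by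
  induction b with
  | zero => simp
  | succ b ih =>
    have h1 : ⁅p, y ^ b⁆ ∈ (⊤ : Subgroup G).lowerCentralSeries (k + 1) := by
      rw [lowerCentralSeries_succ]
      exact commutator_mem_commutator hp (mem_top _)
    have hc := central_of_mem_lcs_aux hbot h1
    have key : ⁅p, y * y ^ b⁆ = ⁅p, y⁆ * (y * ⁅p, y ^ b⁆ * y⁻¹) := by
      simp only [commutatorElement_def]; group
    calc ⁅p, y ^ (b + 1)⁆ = ⁅p, y * y ^ b⁆ := by rw [pow_succ']
      _ = ⁅p, y⁆ * (y * ⁅p, y ^ b⁆ * y⁻¹) := key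
      _ = ⁅p, y⁆ * (⁅p, y ^ b⁆ * y * y⁻¹) := by rw [← hc y]
      _ = ⁅p, y⁆ * ⁅p, y ^ b⁆ := by group
      _ = ⁅p, y⁆ * ⁅p, y⁆ ^ b := by rw [ih]
      _ = ⁅p, y⁆ ^ (b + 1) := (pow_succ' _ _).symm

lemma comm_pow_pow_aux {k : ℕ} (hbot : (⊤ : Subgroup G).lowerCentralSeries (k + 2) = ⊥)
    {p : G} (hp : p ∈ (⊤ : Subgroup G).lowerCentralSeries k) (y : G) (a b : ℕ) :
    ⁅p ^ a, y ^ b⁆ = ⁅p, y⁆ ^ (a * b) := by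
  rw [comm_pow_left_aux hbot hp, comm_pow_right_aux hbot hp, ← pow_mul, mul_comm b a]

lemma lcs_map_surjective_aux {H : Type*} [Group H] (f : G →* H)
    (hf : Function.Surjective f) (n : ℕ) :
    Subgroup.map f ((⊤ : Subgroup G).lowerCentralSeries n) = (⊤ : Subgroup H).lowerCentralSeries n := by
  induction n with
  | zero => simpa using Subgroup.map_top_of_surjective f hf
  | succ n ih =>
    have h1 : (⊤ : Subgroup G).lowerCentralSeries (n + 1) = ⁅(⊤ : Subgroup G).lowerCentralSeries n, ⊤⁆ := rfl
    have h2 : (⊤ : Subgroup H).lowerCentralSeries (n + 1) = ⁅(⊤ : Subgroup H).lowerCentralSeries n, ⊤⁆ := rfl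
    rw [h1, h2, Subgroup.map_commutator, ih, Subgroup.map_top_of_surjective f hf]

lemma comm_mul_central_aux {a c d : G} (hc : ∀ q : G, c * q = q * c) :
    ⁅a * c, d⁆ = ⁅a, d⁆ := by
  have h1 : c * d = d * c := hc d
  rw [commutatorElement_def, commutatorElement_def]
  calc a * c * d * (a * c)⁻¹ * d⁻¹ = a * (c * d) * c⁻¹ * a⁻¹ * d⁻¹ := by group
    _ = a * (d * c) * c⁻¹ * a⁻¹ * d⁻¹ := by rw [h1]
    _ = a * d * a⁻¹ * d⁻¹ := by group

/-- Key approximation: every element of `γ k (G)` has a positive power which is congruent,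
modulo `γ (k+1) (G)`, to an element of (the image of) `γ k (U)`. -/
lemma approx_aux (U : Subgroup G) [U.Normal] [U.FiniteIndex] (k : ℕ) :
    ∀ b ∈ (⊤ : Subgroup G).lowerCentralSeries k, ∃ m : ℕ, 1 ≤ m ∧
      ∃ u ∈ ((⊤ : Subgroup U).lowerCentralSeries k).map U.subtype,
        b⁻¹ ^ m * u ∈ (⊤ : Subgroup G).lowerCentralSeries (k + 1) := by
  induction k with
  | zero =>
    intro b _
    refine ⟨U.index, Nat.one_le_iff_ne_zero.mpr (Subgroup.FiniteIndex.index_ne_zero (H := U)), b ^ U.index,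
      ⟨⟨b ^ U.index, U.pow_index_mem b⟩, mem_top _, rfl⟩, ?_⟩
    rw [inv_pow, inv_mul_cancel]
    exact one_mem _
  | succ k ih =>
    intro b hb
    set N := (⊤ : Subgroup G).lowerCentralSeries (k + 2) with hN
    let π := QuotientGroup.mk' N
    have hπs : Function.Surjective π := QuotientGroup.mk'_surjective N
    have hbotQ : (⊤ : Subgroup (G ⧸ N)).lowerCentralSeries (k + 2) = ⊥ := by
      rw [← lcs_map_surjective_aux π hπs, Subgroup.map_eq_bot_iff, QuotientGroup.ker_mk']
    have hker : ∀ x : G, π x = 1 ↔ x ∈ N := fun x => QuotientGroup.eq_one_iff x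
    have hcent : ∀ x ∈ (⊤ : Subgroup G).lowerCentralSeries (k + 1), ∀ q : G ⧸ N, π x * q = q * π x := by
      intro x hx q
      obtain ⟨g, rfl⟩ := hπs q
      have hmem : ⁅x, g⁆ ∈ N := by
        rw [hN, lowerCentralSeries_succ]
        exact commutator_mem_commutator hx (mem_top g)
      have h2 : ⁅π x, π g⁆ = 1 := by
        rw [← map_commutatorElement]
        exact (hker _).mpr hmem
      exact commutatorElement_eq_one_iff_mul_comm.mp h2
    -- turn the conclusion into an equation in the quotient
    have hgoal : ∀ x u : G, ∀ m : ℕ, π u = π x ^ m → x⁻¹ ^ m * u ∈ (⊤ : Subgroup G).lowerCentralSeries (k + 1 + 1) := by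
      intro x u m h
      have : π (x⁻¹ ^ m * u) = 1 := by
        rw [map_mul, map_pow, map_inv, h, inv_pow, inv_mul_cancel]
      exact (hker _).mp this
    have hval : ∀ x u : G, ∀ m : ℕ, x⁻¹ ^ m * u ∈ (⊤ : Subgroup G).lowerCentralSeries (k + 1 + 1) → π u = π x ^ m := by
      intro x u m h
      have h1 : π (x⁻¹ ^ m * u) = 1 := (hker _).mpr h
      rw [map_mul, map_pow, map_inv, inv_pow] at h1
      exact (inv_mul_eq_one.mp h1).symm
    rw [lowerCentralSeries_succ] at hb
    induction hb using Subgroup.closure_induction with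
    | mem x hxgen =>
      obtain ⟨p, hp, y, -, rfl⟩ := hxgen
      obtain ⟨m, hm, u, hu, hmod⟩ := ih p hp
      obtain ⟨u', hu', rfl⟩ := hu
      set n := U.index with hn
      have hn1 : 1 ≤ n := Nat.one_le_iff_ne_zero.mpr (Subgroup.FiniteIndex.index_ne_zero (H := U))
      set y' : U := ⟨y ^ n, U.pow_index_mem y⟩ with hy'
      have hv : ⁅u', y'⁆ ∈ (⊤ : Subgroup U).lowerCentralSeries (k + 1) := by
        rw [lowerCentralSeries_succ]
        exact commutator_mem_commutator hu' (mem_top _)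
      refine ⟨m * n, Nat.one_le_iff_ne_zero.mpr
        (Nat.mul_ne_zero (by omega) (by omega)), U.subtype ⁅u', y'⁆,
        mem_map_of_mem _ hv, ?_⟩
      apply hgoal
      have hz : (U.subtype u')⁻¹ * (U.subtype u') = 1 := by group
      -- π u' = (π p)^m * π z with z central
      have hzmem : p⁻¹ ^ m * U.subtype u' ∈ (⊤ : Subgroup G).lowerCentralSeries (k + 1) := hmod
      have hpq : π p ∈ (⊤ : Subgroup (G ⧸ N)).lowerCentralSeries k :=
        lowerCentralSeries.map π k (Subgroup.mem_map_of_mem π hp)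
      have hsplit : π (U.subtype u') = π p ^ m * π (p⁻¹ ^ m * U.subtype u') := by
        rw [map_mul, map_pow, map_inv, inv_pow, ← mul_assoc, mul_inv_cancel, one_mul]
      have hcentz : ∀ q : G ⧸ N, π (p⁻¹ ^ m * U.subtype u') * q = q * π (p⁻¹ ^ m * U.subtype u') :=
        hcent _ hzmem
      calc π (U.subtype ⁅u', y'⁆) = ⁅π (U.subtype u'), π (y ^ n)⁆ := by
            rw [map_commutatorElement, map_commutatorElement]
            rfl
        _ = ⁅π p ^ m * π (p⁻¹ ^ m * U.subtype u'), π y ^ n⁆ := by rw [← hsplit, map_pow]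
        _ = ⁅π p ^ m, π y ^ n⁆ := comm_mul_central_aux hcentz
        _ = ⁅π p, π y⁆ ^ (m * n) := comm_pow_pow_aux hbotQ hpq _ _ _
        _ = π ⁅p, y⁆ ^ (m * n) := by rw [map_commutatorElement]
    | one =>
      exact ⟨1, le_refl 1, 1, one_mem _, by simpa using one_mem _⟩
    | mul x y hx hy ihx ihy =>
      obtain ⟨m1, hm1, u1, hu1, h1⟩ := ihx
      obtain ⟨m2, hm2, u2, hu2, h2⟩ := ihy
      have hxmem : x ∈ (⊤ : Subgroup G).lowerCentralSeries (k + 1) := by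
        rw [lowerCentralSeries_succ]; exact hx
      have hymem : y ∈ (⊤ : Subgroup G).lowerCentralSeries (k + 1) := by
        rw [lowerCentralSeries_succ]; exact hy
      refine ⟨m1 * m2, Nat.one_le_iff_ne_zero.mpr (Nat.mul_ne_zero (by omega) (by omega)),
        u1 ^ m2 * u2 ^ m1, mul_mem (pow_mem hu1 m2) (pow_mem hu2 m1), ?_⟩
      apply hgoal
      have e1 : π u1 = π x ^ m1 := hval _ _ _ h1
      have e2 : π u2 = π y ^ m2 := hval _ _ _ h2
      have hcomm : Commute (π x) (π y) := hcent x hxmem (π y)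
      rw [map_mul, map_mul, map_pow, map_pow, e1, e2, hcomm.mul_pow, ← pow_mul, ← pow_mul,
        mul_comm m2 m1]
    | inv x hx ihx =>
      obtain ⟨m, hm, u, hu, h1⟩ := ihx
      refine ⟨m, hm, u⁻¹, inv_mem hu, ?_⟩
      apply hgoal
      have e1 : π u = π x ^ m := hval _ _ _ h1
      rw [map_inv, map_inv, e1, inv_pow]

end Aux

/-- In a torsion-free nilpotent group, a normal subgroup of finite index has the same
nilpotency class as the whole group. -/
theorem stmt_13 {V : Type*} [Group V] [Group.IsNilpotent V]
    (hTF : ∀ g : V, g ≠ 1 → ¬IsOfFinOrder g)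
    (U : Subgroup V) [U.Normal] [U.FiniteIndex] :
    Group.nilpotencyClass U = Group.nilpotencyClass V := by
  refine le_antisymm (Subgroup.nilpotencyClass_le U) ?_
  by_contra hlt
  push_neg at hlt
  -- hlt : Group.nilpotencyClass U < Group.nilpotencyClass V
  obtain ⟨d, hd⟩ : ∃ d, Group.nilpotencyClass V = d + 1 := by
    cases h : Group.nilpotencyClass V with
    | zero => omega
    | succ d => exact ⟨d, rfl⟩
  have hUbot : (⊤ : Subgroup U).lowerCentralSeries d = ⊥ :=
    lowerCentralSeries_eq_bot_iff_nilpotencyClass_le.mpr (by omega)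
  have hVne : (⊤ : Subgroup V).lowerCentralSeries d ≠ ⊥ := by
    intro h
    have := lowerCentralSeries_eq_bot_iff_nilpotencyClass_le.mp h
    omega
  obtain ⟨b, hb, hbne⟩ : ∃ b ∈ (⊤ : Subgroup V).lowerCentralSeries d, b ≠ 1 := by
    by_contra h
    push_neg at h
    exact hVne ((Subgroup.eq_bot_iff_forall _).mpr h)
  obtain ⟨m, hm, u, hu, hmod⟩ := approx_aux U d b hb
  have hbotV : (⊤ : Subgroup V).lowerCentralSeries (d + 1) = ⊥ := by
    rw [← hd]; exact lowerCentralSeries_nilpotencyClass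
  rw [hbotV, Subgroup.mem_bot, inv_pow, inv_mul_eq_one] at hmod
  -- hmod : b ^ m = u
  rw [hUbot, Subgroup.map_bot, Subgroup.mem_bot] at hu
  -- so b ^ m = 1
  have : b ^ m = 1 := by rw [hmod, hu]
  exact hTF b hbne (isOfFinOrder_iff_pow_eq_one.mpr ⟨m, by omega, this⟩)
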